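/- Suppose λ ∈ ℝ and u ∈ ℝ^n with u > 0 entrywise, ‖u‖ = 1, and r(u,λ) ≥ 0 entrywise. Then (1/2)(1 + u^T u) − Γ · u^T J(u,λ)^{-1} · diag(2u_i²/(a_i + u_i²)²) · u ≥ 0, and equality holds if and only if r(u,λ) = 0. -/

import Mathlib

open Matrix Finset

lemma scal_id (a u Γ lam : ℝ) (h : a + u^2 ≠ 0) :
    (Γ - lam)*u - Γ*((a - u^2)/(a+u^2)^2 * u)
      = Γ*((1 - 1/(a+u^2))*u) - lam*u + Γ*(2*u^2/(a+u^2)^2*u) := by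
  have h2 : (a+u^2)^2 ≠ 0 := pow_ne_zero _ h
  field_simp
  ring

lemma key_nonneg {n : ℕ} (B : Matrix (Fin n) (Fin n) ℝ)
    (hB : ∀ i j, i ≠ j → B i j ≤ 0)
    (u : Fin n → ℝ) (hu : ∀ i, 0 < u i) (hBu : ∀ i, 0 < (B *ᵥ u) i)
    (x : Fin n → ℝ) (hx : ∀ i, 0 ≤ (B *ᵥ x) i) : ∀ i, 0 ≤ x i := by
  rcases Nat.eq_zero_or_pos n with hn | hn
  · subst hn; exact fun i => absurd i.2 (by simp)
  have : Nonempty (Fin n) := ⟨⟨0, hn⟩⟩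
  obtain ⟨i0, -, hi0⟩ := Finset.exists_max_image Finset.univ (fun i => -x i / u i)
    ⟨Classical.arbitrary (Fin n), Finset.mem_univ _⟩
  set t := -x i0 / u i0 with ht
  have hle : ∀ i, -x i ≤ t * u i := by
    intro i
    have h := hi0 i (Finset.mem_univ i)
    calc -x i = (-x i / u i) * u i := (div_mul_cancel₀ _ (hu i).ne').symm
    _ ≤ t * u i := mul_le_mul_of_nonneg_right h (hu i).le
  rcases le_or_gt t 0 with htle | htpos
  · intro i
    have := (hle i).trans (mul_nonpos_of_nonpos_of_nonneg htle (hu i).le)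
    linarith
  · exfalso
    set y : Fin n → ℝ := x + t • u with hy
    have hy0 : ∀ i, 0 ≤ y i := fun i => by
      have := hle i; simp only [hy, Pi.add_apply, Pi.smul_apply, smul_eq_mul]; linarith
    have hyi0 : y i0 = 0 := by
      have : t * u i0 = -x i0 := div_mul_cancel₀ _ (hu i0).ne'
      simp only [hy, Pi.add_apply, Pi.smul_apply, smul_eq_mul]; linarith
    have h1 : 0 < (B *ᵥ y) i0 := by
      have hlin : (B *ᵥ y) i0 = (B *ᵥ x) i0 + t * (B *ᵥ u) i0 := by
        simp [hy, Matrix.mulVec_add, Matrix.mulVec_smul]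
      rw [hlin]
      nlinarith [hBu i0, hx i0]
    have h2 : (B *ᵥ y) i0 ≤ 0 := by
      rw [mulVec, dotProduct]
      apply Finset.sum_nonpos
      intro j _
      rcases eq_or_ne j i0 with rfl | hne
      · rw [hyi0]; simp
      · exact mul_nonpos_of_nonpos_of_nonneg (hB i0 j (Ne.symm hne)) (hy0 j)
    linarith


noncomputable def enorm {n : ℕ} (u : Fin n → ℝ) : ℝ := Real.sqrt (∑ i, u i ^ 2)

def IsZMatrix {n : ℕ} (B : Matrix (Fin n) (Fin n) ℝ) : Prop :=
  ∀ i j, i ≠ j → B i j ≤ 0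

def IsIrreducibleMat {n : ℕ} (B : Matrix (Fin n) (Fin n) ℝ) : Prop :=
  ¬ ∃ S : Finset (Fin n), S.Nonempty ∧ S ≠ Finset.univ ∧
    ∀ i ∈ S, ∀ j ∉ S, B i j = 0

def IsNonsingularM {n : ℕ} (B : Matrix (Fin n) (Fin n) ℝ) : Prop :=
  IsZMatrix B ∧ IsUnit B ∧ ∀ i j, 0 ≤ B⁻¹ i j

noncomputable def calA {n : ℕ} (A : Matrix (Fin n) (Fin n) ℝ) (Γ : ℝ) (a : Fin n → ℝ)
    (u : Fin n → ℝ) : Matrix (Fin n) (Fin n) ℝ :=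
  A + Γ • Matrix.diagonal (fun i => 1 - 1 / (a i + u i ^ 2))

noncomputable def rvec {n : ℕ} (A : Matrix (Fin n) (Fin n) ℝ) (Γ : ℝ) (a : Fin n → ℝ)
    (u : Fin n → ℝ) (lam : ℝ) : Fin n → ℝ :=
  calA A Γ a u *ᵥ u - lam • u

noncomputable def Jmat {n : ℕ} (A : Matrix (Fin n) (Fin n) ℝ) (Γ : ℝ) (a : Fin n → ℝ)
    (u : Fin n → ℝ) (lam : ℝ) : Matrix (Fin n) (Fin n) ℝ :=
  A + (Γ - lam) • (1 : Matrix (Fin n) (Fin n) ℝ)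
    - Γ • Matrix.diagonal (fun i => (a i - u i ^ 2) / (a i + u i ^ 2) ^ 2)

noncomputable def lamOf {n : ℕ} [NeZero n] (A : Matrix (Fin n) (Fin n) ℝ) (Γ : ℝ)
    (a : Fin n → ℝ) (u : Fin n → ℝ) : ℝ :=
  ⨅ i, (calA A Γ a u *ᵥ u) i / u i

def NewtonSystem {n : ℕ} (A : Matrix (Fin n) (Fin n) ℝ) (Γ : ℝ) (a : Fin n → ℝ)
    (u : Fin n → ℝ) (lam : ℝ) (Δ : Fin n → ℝ) (δ : ℝ) : Prop :=
  Jmat A Γ a u lam *ᵥ Δ - δ • u = -rvec A Γ a u lam ∧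
  -(u ⬝ᵥ Δ) = -(1/2 * (u ⬝ᵥ u - 1))

theorem stmt_3 {n : ℕ} (A : Matrix (Fin n) (Fin n) ℝ) (a : Fin n → ℝ) (Γ : ℝ)
    (ha : ∀ i, 0 < a i) (hΓ : 0 < Γ)
    (hA : IsNonsingularM A) (hAirr : IsIrreducibleMat A)
    (u : Fin n → ℝ) (hu : ∀ i, 0 < u i) (hnorm : _root_.enorm u = 1) (lam : ℝ)
    (hr : ∀ i, 0 ≤ rvec A Γ a u lam i) :
    0 ≤ 1/2 * (1 + u ⬝ᵥ u) -
        Γ * (u ⬝ᵥ ((Jmat A Γ a u lam)⁻¹ *ᵥ fun i => 2 * u i ^ 2 / (a i + u i ^ 2) ^ 2 * u i)) ∧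
    (1/2 * (1 + u ⬝ᵥ u) -
        Γ * (u ⬝ᵥ ((Jmat A Γ a u lam)⁻¹ *ᵥ fun i => 2 * u i ^ 2 / (a i + u i ^ 2) ^ 2 * u i)) = 0
      ↔ rvec A Γ a u lam = 0) := by
  
  have hJZ : ∀ i j, i ≠ j → Jmat A Γ a u lam i j ≤ 0 := by
    intro i j hij
    have hz := hA.1 i j hij
    simp [Jmat, Matrix.one_apply_ne hij, Matrix.diagonal_apply_ne _ hij]
    linarith
  have hden : ∀ i, (0:ℝ) < a i + u i ^ 2 := fun i => by have := ha i; positivity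
  set w : Fin n → ℝ := fun i => 2 * u i ^ 2 / (a i + u i ^ 2) ^ 2 * u i with hw
  have hwpos : ∀ i, 0 < w i := fun i => by
    have h1 := hden i; have h2 := hu i
    simp only [hw]
    exact mul_pos (div_pos (by positivity) (pow_pos h1 2)) h2
  have hJu : Jmat A Γ a u lam *ᵥ u = rvec A Γ a u lam + Γ • w := by
    funext i
    simp only [Jmat, rvec, calA, Matrix.sub_mulVec, Matrix.add_mulVec,
      Matrix.smul_mulVec, Matrix.one_mulVec, Pi.add_apply, Pi.sub_apply,
      Pi.smul_apply, smul_eq_mul, Matrix.mulVec_diagonal]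
    have h := (hden i).ne'
    have e := scal_id (a i) (u i) Γ lam h
    simp only [hw]
    linarith [e]
  have hJupos : ∀ i, 0 < (Jmat A Γ a u lam *ᵥ u) i := by
    intro i
    rw [hJu]
    have := hr i; have := hwpos i
    simp only [Pi.add_apply, Pi.smul_apply, smul_eq_mul]
    nlinarith
  have hJunit : IsUnit (Jmat A Γ a u lam) := by
    rw [← Matrix.mulVec_injective_iff_isUnit]
    rw [Matrix.mulVec_injective_iff, ← Matrix.mulVec_injective_iff]
    intro x1 x2 hx12
    have hz : Jmat A Γ a u lam *ᵥ (x1 - x2) = 0 := by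
      rw [Matrix.mulVec_sub, hx12, sub_self]
    have h1 : ∀ i, 0 ≤ (x1 - x2) i :=
      key_nonneg _ hJZ u hu hJupos _ (fun i => by rw [hz]; exact le_refl 0)
    have h2 : ∀ i, 0 ≤ (x2 - x1) i :=
      key_nonneg _ hJZ u hu hJupos _ (fun i => by
        rw [show x2 - x1 = -(x1 - x2) from by ring, Matrix.mulVec_neg, hz]; simp)
    funext i
    have := h1 i; have := h2 i
    simp only [Pi.sub_apply] at *
    linarith
  have hdet : IsUnit (Jmat A Γ a u lam).det := (Matrix.isUnit_iff_isUnit_det _).mp hJunit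
  set x : Fin n → ℝ := (Jmat A Γ a u lam)⁻¹ *ᵥ rvec A Γ a u lam with hx
  have hJx : Jmat A Γ a u lam *ᵥ x = rvec A Γ a u lam := by
    rw [hx, Matrix.mulVec_mulVec, Matrix.mul_nonsing_inv _ hdet, Matrix.one_mulVec]
  have hxn : ∀ i, 0 ≤ x i :=
    key_nonneg _ hJZ u hu hJupos _ (fun i => by rw [hJx]; exact hr i)
  have huu : u ⬝ᵥ u = 1 := by
    have h1 : ∑ i, u i ^ 2 = 1 := by
      have h := hnorm
      rw [_root_.enorm, Real.sqrt_eq_one] at h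
      exact h
    rw [dotProduct, ← h1]
    exact Finset.sum_congr rfl fun i _ => (sq (u i)).symm ▸ by ring
  have hinvJu : (Jmat A Γ a u lam)⁻¹ *ᵥ (Jmat A Γ a u lam *ᵥ u) = u := by
    rw [Matrix.mulVec_mulVec, Matrix.nonsing_inv_mul _ hdet, Matrix.one_mulVec]
  have hkey : Γ • ((Jmat A Γ a u lam)⁻¹ *ᵥ w) = u - x := by
    have := hinvJu
    rw [hJu, Matrix.mulVec_add, Matrix.mulVec_smul, ← hx] at this
    funext i
    have := congrFun this i
    simp only [Pi.add_apply, Pi.smul_apply, Pi.sub_apply, smul_eq_mul] at *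
    linarith
  have hQ : 1/2 * (1 + u ⬝ᵥ u) -
      Γ * (u ⬝ᵥ ((Jmat A Γ a u lam)⁻¹ *ᵥ w)) = u ⬝ᵥ x := by
    have h2 : Γ * (u ⬝ᵥ ((Jmat A Γ a u lam)⁻¹ *ᵥ w))
        = u ⬝ᵥ (Γ • ((Jmat A Γ a u lam)⁻¹ *ᵥ w)) := by
      rw [dotProduct_smul, smul_eq_mul]
    rw [h2, hkey, dotProduct_sub, huu]
    ring
  have hux : 0 ≤ u ⬝ᵥ x :=
    Finset.sum_nonneg fun i _ => mul_nonneg (hu i).le (hxn i)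
  constructor
  · rw [hQ]; exact hux
  · rw [hQ]
    constructor
    · intro h0
      have hall : ∀ i ∈ Finset.univ, u i * x i = 0 :=
        (Finset.sum_eq_zero_iff_of_nonneg
          (fun i _ => mul_nonneg (hu i).le (hxn i))).mp h0
      have hx0 : x = 0 := by
        funext i
        have := hall i (Finset.mem_univ i)
        rcases mul_eq_zero.mp this with h | h
        · exact absurd h (hu i).ne'
        · exact h
      rw [← hJx, hx0, Matrix.mulVec_zero]
    · intro h0
      have hx0 : x = 0 := by rw [hx, h0, Matrix.mulVec_zero]
      rw [hx0, dotProduct_zero]
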